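/- If G is a loopless directed graph for which the number of derangements on G equals exactly half the number of permutations on G, then G is a directed cycle. -/

import Mathlib

/-
Proof outline:
* `chord`: from a compatible cycle `π` and an extra arc `(v,w)` with `w ∉ {v, π v}`, build a
  compatible cycle through `v` that fixes `π v` (follow the chord, then `π`, skipping the
  stretch between `π v` and `w`).
* `lemX` (by induction on `K` via contraction of the arc `v₀ → y`): if a digraph has at least
  two "Hamiltonian" cycles with support exactly `K`, it has at least as many "short" compatible
  cycles through `v₀`.
* Main theorem: fibre the set of permutations over the permutations fixing a base point `v₀`
  (removing the `v₀`-cycle). The hypothesis `2·#derangements = #permutations` forces, fibrewise,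
  exactly one Hamiltonian extension and no short extension, whence the permutation set is
  `{1, π}` with `π` a full cycle, and `E` is exactly the graph of `π` (via `chord`).
-/

open Equiv Equiv.Perm

namespace Stmt5Aux

set_option linter.unusedSectionVars false


variable {V : Type*} [Fintype V] [DecidableEq V] {A : V → V → Prop}

/-- Chord lemma: from a cycle `π` compatible with `A` and an extra arc `A v w` with
`w ∉ {v, π v}`, we construct a *shorter* cycle through `v` that fixes `π v`. -/
theorem chord (π : Perm V) (hcyc : π.IsCycle) (hcompat : ∀ x, π x ≠ x → A x (π x))
    {v w : V} (hv : π v ≠ v) (hw : π w ≠ w) (hA : A v w) (hwv : w ≠ v) (hwpv : w ≠ π v) :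
    ∃ σ : Perm V, σ.IsCycle ∧ σ v = w ∧ σ (π v) = π v ∧
      (∀ x, σ x ≠ x → A x (σ x)) ∧ (∀ x, σ x ≠ x → π x ≠ x) := by
  classical
  have hex : ∃ m : ℕ, (π ^ m) v = w := hcyc.exists_pow_eq hv hw
  set k := Nat.find hex with hk
  have hkspec : (π ^ k) v = w := Nat.find_spec hex
  have hkmin : ∀ m < k, (π ^ m) v ≠ w := fun m hm => Nat.find_min hex hm
  have hk0 : k ≠ 0 := by
    intro h; apply hwv; rw [← hkspec, h]; simp
  have hk1 : k ≠ 1 := by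
    intro h; apply hwpv; rw [← hkspec, h]; simp
  have hk2 : 2 ≤ k := by omega
  -- basic facts about the interval U = {π^j v : 1 ≤ j < k}
  have u1 : ∀ j, 1 ≤ j → j < k → (π ^ j) v ≠ v := by
    intro j h1 h2 hEq
    apply hkmin (k - j) (by omega)
    have : (π ^ (k - j)) ((π ^ j) v) = (π ^ k) v := by
      rw [← Perm.mul_apply, ← pow_add]; congr 2; omega
    rw [hEq] at this; rw [this, hkspec]
  have hπinvw : π⁻¹ w = (π ^ (k - 1)) v := by
    have : π ((π ^ (k - 1)) v) = w := by
      rw [← Perm.mul_apply]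
      have : π * π ^ (k - 1) = π ^ k := by
        rw [← pow_succ']; congr 1; omega
      rw [this, hkspec]
    rw [← this]; simp
  have u2 : ∀ j, 1 ≤ j → j < k - 1 → (π ^ j) v ≠ (π ^ (k - 1)) v := by
    intro j h1 h2 hEq
    apply hkmin (j + 1) (by omega)
    have : π ((π ^ j) v) = π ((π ^ (k-1)) v) := by rw [hEq]
    rw [← Perm.mul_apply, ← Perm.mul_apply, ← pow_succ', ← pow_succ'] at this
    have hk1' : (π ^ (k - 1 + 1)) v = (π ^ k) v := by congr 2; omega
    rw [this, hk1', hkspec]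
  set ρ : Perm V := π * Equiv.swap (π⁻¹ w) v with hρ
  have hρv : ρ v = w := by
    rw [hρ, Perm.mul_apply, Equiv.swap_apply_right]; simp
  have hρinvw : ρ (π⁻¹ w) = π v := by
    rw [hρ, Perm.mul_apply, Equiv.swap_apply_left]
  have hρother : ∀ x, x ≠ v → x ≠ π⁻¹ w → ρ x = π x := by
    intro x h1 h2
    rw [hρ, Perm.mul_apply, Equiv.swap_apply_of_ne_of_ne h2 h1]
  set U : Set V := (fun j => (π ^ j) v) '' (Set.Ico 1 k) with hU
  have hmem : ∀ j, 1 ≤ j → j < k → (π ^ j) v ∈ U := by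
    intro j h1 h2; exact ⟨j, ⟨h1, h2⟩, rfl⟩
  have hπvU : π v ∈ U := by
    have := hmem 1 le_rfl (by omega); simpa using this
  have hπinvwU : π⁻¹ w ∈ U := by
    rw [hπinvw]; exact hmem (k-1) (by omega) (by omega)
  have hvU : v ∉ U := by
    rintro ⟨j, ⟨h1, h2⟩, hEq⟩; exact u1 j h1 h2 hEq
  have hmapsto : ∀ x ∈ U, ρ x ∈ U := by
    rintro x ⟨j, ⟨h1, h2⟩, rfl⟩
    show ρ ((π ^ j) v) ∈ U
    by_cases hj : j = k - 1
    · subst hj; rw [← hπinvw, hρinvw]; exact hπvU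
    · have h2' : j < k - 1 := by omega
      rw [hρother _ (u1 j h1 h2) (by rw [hπinvw]; exact u2 j h1 h2')]
      have : π ((π ^ j) v) = (π ^ (j+1)) v := by
        rw [← Perm.mul_apply, ← pow_succ']
      rw [this]; exact hmem (j+1) (by omega) (by omega)
  have hinvmapsto : ∀ x ∈ U, ρ⁻¹ x ∈ U := by
    rintro x ⟨j, ⟨h1, h2⟩, rfl⟩
    show ρ⁻¹ ((π ^ j) v) ∈ U
    by_cases hj : j = 1
    · subst hj
      have : ρ (π⁻¹ w) = (π ^ 1) v := by rw [hρinvw]; simp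
      rw [← this]; simp only [Perm.coe_inv, Equiv.symm_apply_apply]; exact hπinvwU
    · have h1' : 2 ≤ j := by omega
      have : ρ ((π ^ (j-1)) v) = (π ^ j) v := by
        rw [hρother _ (u1 (j-1) (by omega) (by omega))
          (by rw [hπinvw]; exact u2 (j-1) (by omega) (by omega))]
        rw [← Perm.mul_apply, ← pow_succ']; congr 2; omega
      rw [← this]; simp only [Perm.coe_inv, Equiv.symm_apply_apply]
      exact hmem (j-1) (by omega) (by omega)
  have horbit : ∀ i : ℕ, (ρ ^ i) v ∉ U := by
    intro i
    induction i with
    | zero => simpa using hvU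
    | succ n ih =>
      intro hmem'
      apply ih
      have : (ρ ^ n) v = ρ⁻¹ ((ρ ^ (n+1)) v) := by
        rw [pow_succ']; simp
      rw [this]; exact hinvmapsto _ hmem'
  have hnsc : ∀ x ∈ U, ¬ ρ.SameCycle v x := by
    intro x hx hsc
    obtain ⟨i, _, hi⟩ := hsc.exists_pow_eq'
    exact horbit i (hi ▸ hx)
  refine ⟨ρ.cycleOf v, ?_, ?_, ?_, ?_, ?_⟩
  · exact isCycle_cycleOf ρ (by rw [hρv]; exact hwv)
  · rw [cycleOf_apply_self, hρv]
  · exact cycleOf_apply_of_not_sameCycle (hnsc _ hπvU)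
  · intro x hx
    have hsc : ρ.SameCycle v x := by
      by_contra hn
      rw [cycleOf_apply_of_not_sameCycle hn] at hx; exact hx rfl
    rw [cycleOf_apply, if_pos hsc] at hx ⊢
    by_cases hxv : x = v
    · subst hxv; rw [hρv]; exact hA
    · have hxpw : x ≠ π⁻¹ w := fun h => hnsc _ (h ▸ hπinvwU) hsc
      rw [hρother x hxv hxpw] at hx ⊢
      exact hcompat x hx
  · intro x hx
    have hsc : ρ.SameCycle v x := by
      by_contra hn
      rw [cycleOf_apply_of_not_sameCycle hn] at hx; exact hx rfl
    rw [cycleOf_apply, if_pos hsc] at hx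
    by_cases hxv : x = v
    · subst hxv; exact hv
    · have hxpw : x ≠ π⁻¹ w := fun h => hnsc _ (h ▸ hπinvwU) hsc
      rw [hρother x hxv hxpw] at hx; exact hx





/-- Iterates of a moved point of a permutation are moved. -/
theorem moved_pow (τ : Perm V) {y : V} (hy : τ y ≠ y) (m : ℕ) : τ ((τ ^ m) y) ≠ (τ ^ m) y := by
  intro hfix
  set z := (τ ^ m) y with hz
  have h1 : (τ ^ m) z = z := pow_apply_eq_self_of_apply_eq_self hfix m
  have h2 : z = y := (τ ^ m).injective (by rw [h1, ← hz])
  rw [h2] at hfix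
  exact hy hfix

/-- Inserting a new point `v₀` into a cycle just before `y` yields a cycle. -/
theorem insert_isCycle (τ : Perm V) (hcyc : τ.IsCycle) {v₀ y : V} (hv₀ : τ v₀ = v₀)
    (hy : τ y ≠ y) (hne : y ≠ v₀) : (Equiv.swap v₀ y * τ).IsCycle := by
  classical
  set f : Perm V := Equiv.swap v₀ y * τ with hf
  have hfv₀ : f v₀ = y := by rw [hf, Perm.mul_apply, hv₀, Equiv.swap_apply_left]
  have trace : ∀ m : ℕ, ∃ j : ℕ, (f ^ j) v₀ = (τ ^ m) y := by
    intro m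
    induction m with
    | zero => exact ⟨1, by simpa using hfv₀⟩
    | succ m ih =>
      obtain ⟨j, hj⟩ := ih
      set x := (τ ^ m) y with hx
      have hxm : τ x ≠ x := moved_pow τ hy m
      have hxv₀ : x ≠ v₀ := by intro h; rw [h, hv₀] at hxm; exact hxm rfl
      have hτxv₀ : τ x ≠ v₀ := by
        intro h; exact hxv₀ (τ.injective (by rw [h, hv₀]))
      by_cases hτxy : τ x = y
      · refine ⟨1, ?_⟩
        have : (τ ^ (m+1)) y = y := by rw [pow_succ', Perm.mul_apply, ← hx, hτxy]
        rw [this]; simpa using hfv₀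
      · refine ⟨j + 1, ?_⟩
        have : f x = τ x := by
          rw [hf, Perm.mul_apply, Equiv.swap_apply_of_ne_of_ne hτxv₀ hτxy]
        rw [pow_succ', Perm.mul_apply, pow_succ', Perm.mul_apply, hj]
        exact this
  refine ⟨v₀, by rw [hfv₀]; exact hne, ?_⟩
  intro x hx
  by_cases hτx : τ x = x
  · -- x is v₀ or y (x moved by f but fixed by τ)
    have : f x = Equiv.swap v₀ y x := by rw [hf, Perm.mul_apply, hτx]
    by_cases h1 : x = v₀
    · rw [h1]
    · by_cases h2 : x = y
      · exact absurd (h2 ▸ hτx) hy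
      · rw [this, Equiv.swap_apply_of_ne_of_ne h1 h2] at hx
        exact absurd rfl hx
  · have hsc : τ.SameCycle y x := hcyc.sameCycle hy hτx
    obtain ⟨i, _, hi⟩ := hsc.exists_pow_eq'
    obtain ⟨j, hj⟩ := trace i
    exact ⟨j, by rw [zpow_natCast, hj, hi]⟩

/-- If `v₀` is on the cycle `c` whose support is fixed by `g`, then the `v₀`-cycle of `g * c`
is `c`. -/
theorem cycleOf_mul_eq {g c : Equiv.Perm V} {v₀ : V} (hcyc : c.IsCycle) (hcv₀ : c v₀ ≠ v₀)
    (hfix : ∀ x, c x ≠ x → g x = x) : (g * c).cycleOf v₀ = c := by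
  classical
  have hval : ∀ x, c x ≠ x → (g * c) x = c x := by
    intro x hx
    have : c (c x) ≠ c x := fun h => hx (c.injective h)
    rw [Perm.mul_apply, hfix (c x) this]
  have hpow : ∀ i : ℕ, ((g * c) ^ i) v₀ = (c ^ i) v₀ := by
    intro i
    induction i with
    | zero => rfl
    | succ m ih =>
      rw [pow_succ', pow_succ', Perm.mul_apply, Perm.mul_apply, ih]
      exact hval _ (moved_pow c hcv₀ m)
  have hsc : ∀ x, (g * c).SameCycle v₀ x ↔ c x ≠ x := by
    intro x
    constructor
    · intro h
      obtain ⟨i, -, hi⟩ := h.exists_pow_eq'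
      rw [hpow] at hi
      rw [← hi]
      exact moved_pow c hcv₀ i
    · intro h
      have : c.SameCycle v₀ x := hcyc.sameCycle hcv₀ h
      obtain ⟨i, -, hi⟩ := this.exists_pow_eq'
      exact ⟨(i : ℤ), by rw [zpow_natCast, hpow, hi]⟩
  ext x
  rw [cycleOf_apply]
  by_cases h : (g * c).SameCycle v₀ x
  · rw [if_pos h]
    exact hval x ((hsc x).mp h)
  · rw [if_neg h]
    have : ¬ c x ≠ x := fun hh => h ((hsc x).mpr hh)
    push_neg at this
    exact this.symm





open scoped Classical in
/-- Cycles with support exactly `K`, compatible with the arc relation `A`. -/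
noncomputable def hamF (A : V → V → Prop) (K : Set V) : Finset (Perm V) :=
  Finset.univ.filter (fun σ => σ.IsCycle ∧ (∀ x, σ x ≠ x ↔ x ∈ K) ∧ ∀ x, σ x ≠ x → A x (σ x))

open scoped Classical in
/-- Cycles moving `v₀`, with support inside `K` but not all of `K`, compatible with `A`. -/
noncomputable def shortF (A : V → V → Prop) (K : Set V) (v₀ : V) : Finset (Perm V) :=
  Finset.univ.filter (fun σ => σ.IsCycle ∧ σ v₀ ≠ v₀ ∧
    (∀ x, σ x ≠ x → x ∈ K ∧ A x (σ x)) ∧ ∃ x ∈ K, σ x = x)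

theorem mem_hamF {A : V → V → Prop} {K : Set V} {σ : Perm V} :
    σ ∈ hamF A K ↔ σ.IsCycle ∧ (∀ x, σ x ≠ x ↔ x ∈ K) ∧ ∀ x, σ x ≠ x → A x (σ x) := by
  simp [hamF]

theorem mem_shortF {A : V → V → Prop} {K : Set V} {v₀ : V} {σ : Perm V} :
    σ ∈ shortF A K v₀ ↔ σ.IsCycle ∧ σ v₀ ≠ v₀ ∧
      (∀ x, σ x ≠ x → x ∈ K ∧ A x (σ x)) ∧ ∃ x ∈ K, σ x = x := by
  simp [shortF]

/-- If a member of `hamF A K` swaps `v₀` and `y`, then it is the unique member with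
`σ v₀ = y`. -/
theorem ham_unique_of_swap {A : V → V → Prop} {K : Set V} {σ σ' : Perm V} {v₀ y : V}
    (hv₀ : v₀ ∈ K) (hσ : σ ∈ hamF A K) (hσ' : σ' ∈ hamF A K)
    (h1 : σ v₀ = y) (h2 : σ y = v₀) (h1' : σ' v₀ = y) : σ' = σ := by
  obtain ⟨hcyc, hsupp, -⟩ := mem_hamF.mp hσ
  obtain ⟨hcyc', hsupp', -⟩ := mem_hamF.mp hσ'
  have hmv₀ : σ v₀ ≠ v₀ := (hsupp v₀).mpr hv₀
  have hyv₀ : y ≠ v₀ := h1 ▸ hmv₀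
  have horb : ∀ i : ℕ, (σ ^ i) v₀ = v₀ ∨ (σ ^ i) v₀ = y := by
    intro i
    induction i with
    | zero => left; rfl
    | succ m ih =>
      rw [pow_succ', Perm.mul_apply]
      rcases ih with h | h
      · right; rw [h, h1]
      · left; rw [h, h2]
  have hKsub : ∀ x ∈ K, x = v₀ ∨ x = y := by
    intro x hx
    have hscx : σ.SameCycle v₀ x := hcyc.sameCycle hmv₀ ((hsupp x).mpr hx)
    obtain ⟨i, -, hi⟩ := hscx.exists_pow_eq'
    rcases horb i with h | h
    · left; rw [← hi, h]
    · right; rw [← hi, h]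
  ext x
  by_cases hx : x ∈ K
  · rcases hKsub x hx with rfl | rfl
    · rw [h1, h1']
    · rw [h2]
      have hm : σ' x ≠ x := (hsupp' x).mpr hx
      have hm2 : σ' (σ' x) ≠ σ' x := fun h => hm (σ'.injective h)
      have : σ' x ∈ K := (hsupp' (σ' x)).mp hm2
      rcases hKsub _ this with h | h
      · exact h
      · exact absurd h hm
  · have e1 : σ x = x := by by_contra h; exact hx ((hsupp x).mp h)
    have e2 : σ' x = x := by by_contra h; exact hx ((hsupp' x).mp h)
    rw [e1, e2]

theorem sum_fiber_le {α β : Type*} [DecidableEq α] [DecidableEq β] (s : Finset α) (t : Finset β)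
    (f : α → β) : ∑ y ∈ t, (s.filter (fun a => f a = y)).card ≤ s.card := by
  rw [← Finset.card_biUnion]
  · exact Finset.card_le_card (fun a ha => by
      simp only [Finset.mem_biUnion, Finset.mem_filter] at ha; tauto)
  · intro y₁ h₁ y₂ h₂ hne
    apply Finset.disjoint_left.mpr
    intro a ha₁ ha₂
    simp only [Finset.mem_filter] at ha₁ ha₂
    exact hne (ha₁.2 ▸ ha₂.2 ▸ rfl)

/-- Key lemma: if there are at least two "Hamiltonian" cycles on `K`, then there are at least
as many short cycles through `v₀`. -/
theorem lemX : ∀ (n : ℕ) (A : V → V → Prop) (K : Set V) (v₀ : V), K.ncard = n → v₀ ∈ K →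
    2 ≤ (hamF A K).card → (hamF A K).card ≤ (shortF A K v₀).card := by
  classical
  intro n
  induction n using Nat.strong_induction_on with
  | _ n IH =>
    intro A K v₀ hn hv₀ h2
    have hbucket : ∀ y ∈ (hamF A K).image (fun σ => σ v₀),
        ((hamF A K).filter (fun σ => σ v₀ = y)).card ≤
          ((shortF A K v₀).filter (fun τ => τ v₀ = y)).card := by
      intro y hy
      obtain ⟨H₀, hH₀, hH₀y⟩ := Finset.mem_image.mp hy
      obtain ⟨H₀cyc, H₀supp, H₀compat⟩ := mem_hamF.mp hH₀
      have hmv₀ : H₀ v₀ ≠ v₀ := (H₀supp v₀).mpr hv₀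
      have hyv₀ : y ≠ v₀ := hH₀y ▸ hmv₀
      have hyK : y ∈ K := by
        apply (H₀supp y).mp
        rw [← hH₀y]
        exact fun h => hmv₀ (H₀.injective h)
      have hAy : A v₀ y := hH₀y ▸ H₀compat v₀ hmv₀
      by_cases hcard : ((hamF A K).filter (fun σ => σ v₀ = y)).card ≤ 1
      · -- produce a single short cycle via the chord lemma
        have hex : ∃ H' ∈ hamF A K, H' v₀ ≠ y := by
          by_contra hcon
          push_neg at hcon
          have : (hamF A K).filter (fun σ => σ v₀ = y) = hamF A K := by
            apply Finset.filter_true_of_mem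
            intro σ hσ; exact hcon σ hσ
          rw [this] at hcard; omega
        obtain ⟨H', hH', hH'y⟩ := hex
        obtain ⟨H'cyc, H'supp, H'compat⟩ := mem_hamF.mp hH'
        have hH'v₀ : H' v₀ ≠ v₀ := (H'supp v₀).mpr hv₀
        obtain ⟨σ, hσcyc, hσv₀, hσfix, hσA, hσmov⟩ :=
          chord H' H'cyc H'compat hH'v₀ ((H'supp y).mpr hyK) hAy hyv₀ (Ne.symm hH'y)
        have hσmem : σ ∈ (shortF A K v₀).filter (fun τ => τ v₀ = y) := by
          rw [Finset.mem_filter, mem_shortF]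
          refine ⟨⟨hσcyc, ?_, ?_, ?_⟩, hσv₀⟩
          · rw [hσv₀]; exact hyv₀
          · intro x hx; exact ⟨(H'supp x).mp (hσmov x hx), hσA x hx⟩
          · refine ⟨H' v₀, ?_, hσfix⟩
            apply (H'supp (H' v₀)).mp
            exact fun h => hH'v₀ (H'.injective h)
        have : 1 ≤ ((shortF A K v₀).filter (fun τ => τ v₀ = y)).card :=
          Finset.card_pos.mpr ⟨σ, hσmem⟩
        omega
      · push_neg at hcard
        have hay2 : 2 ≤ ((hamF A K).filter (fun σ => σ v₀ = y)).card := hcard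
        -- no member of the fiber can send y back to v₀
        have hd0 : ∀ σ ∈ (hamF A K).filter (fun σ => σ v₀ = y), σ y ≠ v₀ := by
          intro σ hσ hσy
          obtain ⟨hσH, hσv₀⟩ := Finset.mem_filter.mp hσ
          have huniq : ∀ σ' ∈ (hamF A K).filter (fun σ => σ v₀ = y), σ' = σ := by
            intro σ' hσ'
            obtain ⟨hσ'H, hσ'v₀⟩ := Finset.mem_filter.mp hσ'
            exact ham_unique_of_swap hv₀ hσH hσ'H hσv₀ hσy hσ'v₀
          have : ((hamF A K).filter (fun σ => σ v₀ = y)).card ≤ 1 := by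
            apply Finset.card_le_one.mpr
            intro a ha b hb; rw [huniq a ha, huniq b hb]
          omega
        set K' : Set V := K \ {v₀} with hK'
        set A' : V → V → Prop := fun u z => if z = y then A u v₀ else A u z with hA'
        -- down map into hamF A' K'
        have hdown : ∀ σ ∈ (hamF A K).filter (fun σ => σ v₀ = y),
            (Equiv.swap v₀ y * σ) ∈ hamF A' K' := by
          intro σ hσ
          obtain ⟨hσH, hσv₀⟩ := Finset.mem_filter.mp hσ
          obtain ⟨hcyc, hsupp, hcompat⟩ := mem_hamF.mp hσH
          have hσyv₀ : σ y ≠ v₀ := hd0 σ hσ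
          have hcx : ∀ x, (Equiv.swap v₀ y * σ) x = Equiv.swap v₀ y (σ x) := fun x => rfl
          have key : ∀ x, ((Equiv.swap v₀ y * σ) x ≠ x → x ∈ K') ∧
              (x ∈ K' → (Equiv.swap v₀ y * σ) x ≠ x ∧
                A' x ((Equiv.swap v₀ y * σ) x)) := by
            intro x
            by_cases hxv₀ : x = v₀
            · subst hxv₀
              constructor
              · intro hmoved
                exfalso; apply hmoved
                rw [hcx, hσv₀, Equiv.swap_apply_right]
              · intro hmem; exact absurd hmem.2 (by simp)
            · by_cases hxK : x ∈ K
              · have hσx : σ x ≠ x := (hsupp x).mpr hxK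
                have hAx : A x (σ x) := hcompat x hσx
                by_cases hσxv₀ : σ x = v₀
                · have hxy : x ≠ y := by
                    intro h; rw [h] at hσxv₀; exact hσyv₀ hσxv₀
                  have hval : (Equiv.swap v₀ y * σ) x = y := by
                    rw [hcx, hσxv₀, Equiv.swap_apply_left]
                  constructor
                  · intro _; exact ⟨hxK, hxv₀⟩
                  · intro _
                    refine ⟨by rw [hval]; exact Ne.symm hxy, ?_⟩
                    rw [hval, hA']
                    simp only [if_pos rfl]
                    rw [← hσxv₀]; exact hAx
                · have hσxy : σ x ≠ y := by
                    intro h; exact hxv₀ (σ.injective (by rw [h, hσv₀]))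
                  have hval : (Equiv.swap v₀ y * σ) x = σ x := by
                    rw [hcx, Equiv.swap_apply_of_ne_of_ne hσxv₀ hσxy]
                  constructor
                  · intro _; exact ⟨hxK, hxv₀⟩
                  · intro _
                    refine ⟨by rw [hval]; exact hσx, ?_⟩
                    rw [hval, hA']
                    simp only [if_neg hσxy]
                    exact hAx
              · have hσx : σ x = x := by
                  by_contra h; exact hxK ((hsupp x).mp h)
                have hxy : x ≠ y := fun h => hxK (h ▸ hyK)
                have hval : (Equiv.swap v₀ y * σ) x = x := by
                  rw [hcx, hσx, Equiv.swap_apply_of_ne_of_ne hxv₀ hxy]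
                constructor
                · intro h; exact absurd hval h
                · intro hmem; exact absurd hmem.1 hxK
          rw [mem_hamF]
          refine ⟨?_, ?_, ?_⟩
          · have := hcyc.swap_mul ((hsupp v₀).mpr hv₀)
              (by rw [hσv₀]; exact hσyv₀)
            rwa [hσv₀] at this
          · intro x
            constructor
            · exact (key x).1
            · intro h; exact ((key x).2 h).1
          · intro x hx
            exact ((key x).2 ((key x).1 hx)).2
        have hinjd : Set.InjOn (fun σ => Equiv.swap v₀ y * σ)
            ((hamF A K).filter (fun σ => σ v₀ = y)) := by
          intro a _ b _ hab
          exact mul_left_cancel hab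
        have h1 : ((hamF A K).filter (fun σ => σ v₀ = y)).card ≤ (hamF A' K').card :=
          Finset.card_le_card_of_injOn _ hdown hinjd
        have hKfin : K.Finite := Set.toFinite K
        have hn1 : 1 ≤ n := by
          rw [← hn]
          exact (Set.ncard_pos hKfin).mpr ⟨v₀, hv₀⟩
        have hK'card : K'.ncard = n - 1 := by
          rw [hK', Set.ncard_diff_singleton_of_mem hv₀, hn]
        have hyK' : y ∈ K' := ⟨hyK, hyv₀⟩
        have IH' := IH (n-1) (by omega) A' K' y hK'card hyK' (le_trans hay2 h1)
        -- up map from shortF A' K' y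
        have hτ'facts : ∀ τ' ∈ shortF A' K' y, τ' v₀ = v₀ := by
          intro τ' hτ'
          obtain ⟨-, -, hcomp', -⟩ := mem_shortF.mp hτ'
          by_contra h
          exact (hcomp' v₀ h).1.2 rfl
        have hup : ∀ τ' ∈ shortF A' K' y,
            (Equiv.swap v₀ y * τ') ∈ (shortF A K v₀).filter (fun τ => τ v₀ = y) := by
          intro τ' hτ'
          obtain ⟨hcyc', hyy', hcomp', x₀, hx₀K', hx₀fix⟩ := mem_shortF.mp hτ'
          have hτ'v₀ : τ' v₀ = v₀ := hτ'facts τ' hτ'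
          have hcx : ∀ x, (Equiv.swap v₀ y * τ') x = Equiv.swap v₀ y (τ' x) := fun x => rfl
          have hval₀ : (Equiv.swap v₀ y * τ') v₀ = y := by
            rw [hcx, hτ'v₀, Equiv.swap_apply_left]
          rw [Finset.mem_filter, mem_shortF]
          refine ⟨⟨?_, ?_, ?_, ?_⟩, hval₀⟩
          · exact insert_isCycle τ' hcyc' hτ'v₀ hyy' hyv₀
          · rw [hval₀]; exact hyv₀
          · intro x hx
            by_cases hxv₀ : x = v₀
            · subst hxv₀; rw [hval₀]; exact ⟨hv₀, hAy⟩
            · by_cases hτ'x : τ' x = x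
              · exfalso
                apply hx
                rw [hcx, hτ'x]
                have hxy : x ≠ y := by intro h; rw [h] at hτ'x; exact hyy' hτ'x
                exact Equiv.swap_apply_of_ne_of_ne hxv₀ hxy
              · obtain ⟨hxK', hA'x⟩ := hcomp' x hτ'x
                have hτ'xv₀ : τ' x ≠ v₀ := by
                  intro h; exact hxv₀ (τ'.injective (by rw [h, hτ'v₀]))
                by_cases hτ'xy : τ' x = y
                · have hval : (Equiv.swap v₀ y * τ') x = v₀ := by
                    rw [hcx, hτ'xy, Equiv.swap_apply_right]
                  rw [hval]
                  refine ⟨hxK'.1, ?_⟩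
                  rw [hA'] at hA'x
                  rw [hτ'xy] at hA'x
                  simpa using hA'x
                · have hval : (Equiv.swap v₀ y * τ') x = τ' x := by
                    rw [hcx, Equiv.swap_apply_of_ne_of_ne hτ'xv₀ hτ'xy]
                  rw [hval]
                  refine ⟨hxK'.1, ?_⟩
                  rw [hA'] at hA'x
                  rw [if_neg hτ'xy] at hA'x
                  exact hA'x
          · refine ⟨x₀, hx₀K'.1, ?_⟩
            have hx₀y : x₀ ≠ y := by intro h; rw [h] at hx₀fix; exact hyy' hx₀fix
            rw [hcx, hx₀fix, Equiv.swap_apply_of_ne_of_ne hx₀K'.2 hx₀y]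
        have hinju : Set.InjOn (fun τ' => Equiv.swap v₀ y * τ') (shortF A' K' y) := by
          intro a _ b _ hab
          exact mul_left_cancel hab
        have h3 : (shortF A' K' y).card ≤
            ((shortF A K v₀).filter (fun τ => τ v₀ = y)).card :=
          Finset.card_le_card_of_injOn _ hup hinju
        omega
    calc (hamF A K).card
        = ∑ y ∈ (hamF A K).image (fun σ => σ v₀),
            ((hamF A K).filter (fun σ => σ v₀ = y)).card :=
          Finset.card_eq_sum_card_fiberwise (fun σ hσ => Finset.mem_image_of_mem _ hσ)
      _ ≤ ∑ y ∈ (hamF A K).image (fun σ => σ v₀),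
            ((shortF A K v₀).filter (fun τ => τ v₀ = y)).card := Finset.sum_le_sum hbucket
      _ ≤ (shortF A K v₀).card := sum_fiber_le _ _ _


end Stmt5Aux


open Stmt5Aux

/-- If the number of derangements on a loopless digraph equals exactly half the number of
permutations, then the digraph is a directed cycle (its arc relation is the graph of a
fixed-point-free cyclic permutation of all the vertices). -/
theorem stmt_5 {V : Type*} [Fintype V] (E : V → V → Prop) (hE : Irreflexive E)
    (heq : 2 * {σ : Equiv.Perm V | ∀ v, E v (σ v)}.ncard =
      {σ : Equiv.Perm V | ∀ v, σ v = v ∨ E v (σ v)}.ncard) :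
    ∃ f : Equiv.Perm V, f.IsCycle ∧ (∀ v, f v ≠ v) ∧ ∀ v w, E v w ↔ f v = w := by
  classical
  -- rule out the empty vertex type
  rcases isEmpty_or_nonempty V with hV | hV
  · exfalso
    have hone : ∀ σ : Equiv.Perm V, σ = 1 := fun σ => Equiv.ext (fun v => hV.elim v)
    haveI : Unique (Equiv.Perm V) := ⟨⟨1⟩, hone⟩
    have h1 : {σ : Equiv.Perm V | ∀ v, E v (σ v)} = Set.univ := by
      ext σ; simp only [Set.mem_setOf_eq, Set.mem_univ, iff_true]
      exact fun v => hV.elim v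
    have h2 : {σ : Equiv.Perm V | ∀ v, σ v = v ∨ E v (σ v)} = Set.univ := by
      ext σ; simp only [Set.mem_setOf_eq, Set.mem_univ, iff_true]
      exact fun v => hV.elim v
    rw [h1, h2, Set.ncard_univ, Nat.card_unique] at heq
    omega
  obtain ⟨v₀⟩ := hV
  -- Finset versions of the permutation/derangement sets
  set PF : Finset (Equiv.Perm V) :=
    Finset.univ.filter (fun σ => ∀ v, σ v = v ∨ E v (σ v)) with hPF
  set DF : Finset (Equiv.Perm V) := Finset.univ.filter (fun σ => ∀ v, E v (σ v)) with hDF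
  have hPcard : {σ : Equiv.Perm V | ∀ v, σ v = v ∨ E v (σ v)}.ncard = PF.card := by
    rw [← Set.ncard_coe_finset]; congr 1; ext σ; simp [hPF]
  have hDcard : {σ : Equiv.Perm V | ∀ v, E v (σ v)}.ncard = DF.card := by
    rw [← Set.ncard_coe_finset]; congr 1; ext σ; simp [hDF]
  rw [hPcard, hDcard] at heq
  have hDsubP : DF ⊆ PF := by
    intro σ hσ
    rw [hDF, Finset.mem_filter] at hσ
    rw [hPF, Finset.mem_filter]
    exact ⟨Finset.mem_univ _, fun v => Or.inr (hσ.2 v)⟩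
  have hmemP : ∀ {σ : Equiv.Perm V}, σ ∈ PF ↔ ∀ v, σ v = v ∨ E v (σ v) := by
    intro σ; rw [hPF]; simp
  have hmemD : ∀ {σ : Equiv.Perm V}, σ ∈ DF ↔ ∀ v, E v (σ v) := by
    intro σ; rw [hDF]; simp
  have hDmoves : ∀ {σ : Equiv.Perm V}, σ ∈ DF → ∀ v, σ v ≠ v := by
    intro σ hσ v hfix
    have := hmemD.mp hσ v
    rw [hfix] at this
    exact hE v this
  -- the three parts
  set N₀F : Finset (Equiv.Perm V) := PF.filter (fun σ => σ v₀ = v₀) with hN₀F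
  set N₁F : Finset (Equiv.Perm V) :=
    PF.filter (fun σ => σ v₀ ≠ v₀ ∧ ¬ (∀ v, E v (σ v))) with hN₁F
  have hsplit : PF.card = DF.card + N₀F.card + N₁F.card := by
    have e1 : PF.card = (PF.filter (fun σ => ∀ v, E v (σ v))).card +
        (PF.filter (fun σ => ¬ (∀ v, E v (σ v)))).card :=
      (Finset.card_filter_add_card_filter_not _).symm
    have e2 : PF.filter (fun σ => ∀ v, E v (σ v)) = DF := by
      ext σ
      simp only [Finset.mem_filter, hmemD, hmemP]
      constructor
      · rintro ⟨-, h⟩; exact h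
      · intro h; exact ⟨fun v => Or.inr (h v), h⟩
    have e3 : (PF.filter (fun σ => ¬ (∀ v, E v (σ v)))).card =
        ((PF.filter (fun σ => ¬ (∀ v, E v (σ v)))).filter (fun σ => σ v₀ = v₀)).card +
        ((PF.filter (fun σ => ¬ (∀ v, E v (σ v)))).filter (fun σ => ¬ σ v₀ = v₀)).card :=
      (Finset.card_filter_add_card_filter_not _).symm
    have e4 : (PF.filter (fun σ => ¬ (∀ v, E v (σ v)))).filter (fun σ => σ v₀ = v₀) = N₀F := by
      ext σ
      simp only [Finset.mem_filter, hN₀F, and_assoc]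
      constructor
      · rintro ⟨h1, -, h3⟩; exact ⟨h1, h3⟩
      · rintro ⟨h1, h3⟩
        refine ⟨h1, ?_, h3⟩
        intro hall
        have := hall v₀
        rw [h3] at this
        exact hE v₀ this
    have e5 : (PF.filter (fun σ => ¬ (∀ v, E v (σ v)))).filter (fun σ => ¬ σ v₀ = v₀) = N₁F := by
      ext σ
      simp only [Finset.mem_filter, hN₁F]
      tauto
    rw [e1, e2, e3, e4, e5]; ring
  -- the removal map
  set R : Equiv.Perm V → Equiv.Perm V := fun σ => σ * (σ.cycleOf v₀)⁻¹ with hR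
  have hRval : ∀ (σ : Equiv.Perm V) (x : V),
      R σ x = if σ.SameCycle v₀ x then x else σ x := by
    intro σ x
    by_cases h : σ.SameCycle v₀ x
    · rw [if_pos h, hR]
      have h' : σ.SameCycle v₀ (σ⁻¹ x) := h.trans ⟨-1, by simp⟩
      have hc : σ.cycleOf v₀ (σ⁻¹ x) = x := by
        rw [cycleOf_apply, if_pos h', ← Perm.mul_apply, mul_inv_cancel, Perm.one_apply]
      have : (σ.cycleOf v₀)⁻¹ x = σ⁻¹ x := by
        rw [Perm.inv_eq_iff_eq, hc]
      simp only [Perm.mul_apply, this]; simp only [Perm.coe_inv, Equiv.apply_symm_apply]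
    · rw [if_neg h, hR]
      have hc : σ.cycleOf v₀ x = x := cycleOf_apply_of_not_sameCycle h
      have : (σ.cycleOf v₀)⁻¹ x = x := by rw [Perm.inv_eq_iff_eq, hc]
      simp only [Perm.mul_apply, this]
  have hRv₀ : ∀ σ : Equiv.Perm V, R σ v₀ = v₀ := by
    intro σ; rw [hRval, if_pos (Equiv.Perm.SameCycle.refl _ _)]
  have hRmem : ∀ σ ∈ PF, R σ ∈ N₀F := by
    intro σ hσ
    rw [hN₀F, Finset.mem_filter]
    refine ⟨hmemP.mpr ?_, hRv₀ σ⟩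
    intro v
    rw [hRval]
    by_cases h : σ.SameCycle v₀ v
    · rw [if_pos h]; exact Or.inl rfl
    · rw [if_neg h]; exact hmemP.mp hσ v
  -- fiber bijections with hamF / shortF
  have hfibD : ∀ g ∈ N₀F, (DF.filter (fun σ => R σ = g)).card =
      (hamF E {x | g x = x}).card := by
    intro g hg
    obtain ⟨hgP, hgv₀⟩ := Finset.mem_filter.mp hg
    apply Finset.card_bij' (fun σ _ => σ.cycleOf v₀) (fun c _ => g * c)
    · -- forward map lands in hamF
      intro σ hσ
      obtain ⟨hσD, hRg⟩ := Finset.mem_filter.mp hσ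
      have hσv₀ : σ v₀ ≠ v₀ := hDmoves hσD v₀
      have gval : ∀ x, g x = if σ.SameCycle v₀ x then x else σ x := by
        intro x; rw [← hRg]; exact hRval σ x
      rw [mem_hamF]
      refine ⟨isCycle_cycleOf σ hσv₀, ?_, ?_⟩
      · intro x
        rw [cycleOf_apply, Set.mem_setOf_eq, gval x]
        by_cases h : σ.SameCycle v₀ x
        · rw [if_pos h, if_pos h]
          simp only [iff_true, hDmoves hσD x, not_false_iff]
          exact hDmoves hσD x
        · rw [if_neg h, if_neg h]
          simp only [ne_eq, not_true_eq_false, false_iff]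
          exact hDmoves hσD x
      · intro x hx
        rw [cycleOf_apply] at hx ⊢
        by_cases h : σ.SameCycle v₀ x
        · rw [if_pos h]; exact hmemD.mp hσD x
        · rw [if_neg h] at hx; exact absurd rfl hx
    · -- backward map lands in the fiber
      intro c hc
      obtain ⟨ccyc, csupp, ccompat⟩ := mem_hamF.mp hc
      have hcv₀ : c v₀ ≠ v₀ := (csupp v₀).mpr hgv₀
      have hfixg : ∀ x, c x ≠ x → g x = x := fun x hx => (csupp x).mp hx
      have val : ∀ x, (g * c) x = if c x = x then g x else c x := by
        intro x
        by_cases h : c x = x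
        · rw [if_pos h, Perm.mul_apply, h]
        · rw [if_neg h, Perm.mul_apply]
          have : c (c x) ≠ c x := fun hh => h (c.injective hh)
          exact hfixg (c x) this
      rw [Finset.mem_filter]
      constructor
      · rw [hmemD]
        intro x
        rw [val]
        by_cases h : c x = x
        · rw [if_pos h]
          have hgx : g x ≠ x := fun hh => ((csupp x).mpr hh) h
          rcases hmemP.mp hgP x with h' | h'
          · exact absurd h' hgx
          · exact h'
        · rw [if_neg h]; exact (ccompat x h)
      · have : (g * c).cycleOf v₀ = c := cycleOf_mul_eq ccyc hcv₀ hfixg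
        show (g * c) * ((g * c).cycleOf v₀)⁻¹ = g
        rw [this, mul_inv_cancel_right]
    · -- left inverse
      intro σ hσ
      obtain ⟨-, hRg⟩ := Finset.mem_filter.mp hσ
      rw [← hRg]
      show σ * (σ.cycleOf v₀)⁻¹ * σ.cycleOf v₀ = σ
      rw [inv_mul_cancel_right]
    · -- right inverse
      intro c hc
      obtain ⟨ccyc, csupp, -⟩ := mem_hamF.mp hc
      have hcv₀ : c v₀ ≠ v₀ := (csupp v₀).mpr hgv₀
      exact cycleOf_mul_eq ccyc hcv₀ (fun x hx => (csupp x).mp hx)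
  have hfibN : ∀ g ∈ N₀F, (N₁F.filter (fun σ => R σ = g)).card =
      (shortF E {x | g x = x} v₀).card := by
    intro g hg
    obtain ⟨hgP, hgv₀⟩ := Finset.mem_filter.mp hg
    apply Finset.card_bij' (fun σ _ => σ.cycleOf v₀) (fun c _ => g * c)
    · -- forward
      intro σ hσ
      obtain ⟨hσN, hRg⟩ := Finset.mem_filter.mp hσ
      obtain ⟨hσP, hσv₀, hσnall⟩ := Finset.mem_filter.mp hσN
      obtain ⟨x₀, hx₀E⟩ := not_forall.mp hσnall
      have hx₀ : σ x₀ = x₀ := by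
        rcases hmemP.mp hσP x₀ with h | h
        · exact h
        · exact absurd h hx₀E
      have hnsc : ¬ σ.SameCycle v₀ x₀ := by
        intro hsc
        obtain ⟨i, -, hi⟩ := hsc.symm.exists_pow_eq'
        rw [pow_apply_eq_self_of_apply_eq_self hx₀ i] at hi
        rw [← hi] at hσv₀
        exact hσv₀ hx₀
      have gval : ∀ x, g x = if σ.SameCycle v₀ x then x else σ x := by
        intro x; rw [← hRg]; exact hRval σ x
      rw [mem_shortF]
      refine ⟨isCycle_cycleOf σ hσv₀, ?_, ?_, ?_⟩
      · rw [cycleOf_apply_self]; exact hσv₀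
      · intro x hx
        rw [cycleOf_apply] at hx ⊢
        by_cases h : σ.SameCycle v₀ x
        · rw [if_pos h] at hx ⊢
          refine ⟨?_, hmemP.mp hσP x |>.resolve_left hx⟩
          rw [Set.mem_setOf_eq, gval x, if_pos h]
        · rw [if_neg h] at hx; exact absurd rfl hx
      · refine ⟨x₀, ?_, ?_⟩
        · rw [Set.mem_setOf_eq, gval x₀, if_neg hnsc]; exact hx₀
        · rw [cycleOf_apply, if_neg hnsc]
    · -- backward
      intro c hc
      obtain ⟨ccyc, hcv₀, ccompat, x₀, hx₀K, hx₀c⟩ := mem_shortF.mp hc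
      rw [Set.mem_setOf_eq] at hx₀K
      have hfixg : ∀ x, c x ≠ x → g x = x := fun x hx => (ccompat x hx).1
      have val : ∀ x, (g * c) x = if c x = x then g x else c x := by
        intro x
        by_cases h : c x = x
        · rw [if_pos h, Perm.mul_apply, h]
        · rw [if_neg h, Perm.mul_apply]
          have : c (c x) ≠ c x := fun hh => h (c.injective hh)
          exact hfixg (c x) this
      have hmemP' : g * c ∈ PF := by
        rw [hmemP]
        intro x
        rw [val]
        by_cases h : c x = x
        · rw [if_pos h]; exact hmemP.mp hgP x
        · rw [if_neg h]; exact Or.inr (ccompat x h).2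
      rw [Finset.mem_filter]
      constructor
      · rw [hN₁F, Finset.mem_filter]
        refine ⟨hmemP', ?_, ?_⟩
        · rw [val, if_neg hcv₀]; exact hcv₀
        · intro hall
          have := hall x₀
          rw [val, if_pos hx₀c, hx₀K] at this
          exact hE x₀ this
      · have : (g * c).cycleOf v₀ = c := cycleOf_mul_eq ccyc hcv₀ hfixg
        show (g * c) * ((g * c).cycleOf v₀)⁻¹ = g
        rw [this, mul_inv_cancel_right]
    · intro σ hσ
      obtain ⟨-, hRg⟩ := Finset.mem_filter.mp hσ
      rw [← hRg]
      show σ * (σ.cycleOf v₀)⁻¹ * σ.cycleOf v₀ = σ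
      rw [inv_mul_cancel_right]
    · intro c hc
      obtain ⟨ccyc, hcv₀, ccompat, -⟩ := mem_shortF.mp hc
      exact cycleOf_mul_eq ccyc hcv₀ (fun x hx => (ccompat x hx).1)
  -- fiberwise sums
  have hsumD : DF.card = ∑ g ∈ N₀F, (DF.filter (fun σ => R σ = g)).card :=
    Finset.card_eq_sum_card_fiberwise (fun σ hσ => hRmem σ (hDsubP hσ))
  have hsumN : N₁F.card = ∑ g ∈ N₀F, (N₁F.filter (fun σ => R σ = g)).card :=
    Finset.card_eq_sum_card_fiberwise
      (fun σ hσ => hRmem σ (Finset.mem_of_mem_filter σ hσ))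
  have heq2 : DF.card = N₀F.card + N₁F.card := by
    have hDP : DF.card ≤ PF.card := Finset.card_le_card hDsubP
    omega
  have hkey : ∑ g ∈ N₀F, (hamF E {x | g x = x}).card =
      ∑ g ∈ N₀F, (1 + (shortF E {x | g x = x} v₀).card) := by
    rw [Finset.sum_add_distrib, Finset.sum_const, smul_eq_mul, mul_one]
    rw [← Finset.sum_congr rfl hfibD, ← Finset.sum_congr rfl hfibN]
    rw [← hsumD, ← hsumN]
    exact heq2
  have hle : ∀ g ∈ N₀F, (hamF E {x | g x = x}).card ≤
      1 + (shortF E {x | g x = x} v₀).card := by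
    intro g hg
    obtain ⟨hgP, hgv₀⟩ := Finset.mem_filter.mp hg
    by_cases h : (hamF E {x | g x = x}).card ≤ 1
    · omega
    · push_neg at h
      have := lemX ({x | g x = x}).ncard E {x | g x = x} v₀ rfl hgv₀ h
      omega
  have hterm := (Finset.sum_eq_sum_iff_of_le hle).mp hkey
  have hzero : ∀ g ∈ N₀F, (shortF E {x | g x = x} v₀).card = 0 ∧
      (hamF E {x | g x = x}).card = 1 := by
    intro g hg
    obtain ⟨hgP, hgv₀⟩ := Finset.mem_filter.mp hg
    have he := hterm g hg
    by_cases h : (shortF E {x | g x = x} v₀).card = 0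
    · exact ⟨h, by omega⟩
    · exfalso
      have h1 : 1 ≤ (shortF E {x | g x = x} v₀).card := by omega
      have h2 : 2 ≤ (hamF E {x | g x = x}).card := by omega
      have := lemX ({x | g x = x}).ncard E {x | g x = x} v₀ rfl hgv₀ h2
      omega
  -- N₁F is empty
  have hN₁empty : N₁F = ∅ := by
    rw [← Finset.card_eq_zero, hsumN]
    apply Finset.sum_eq_zero
    intro g hg
    rw [hfibN g hg]
    exact (hzero g hg).1
  -- N₀F = {1}
  have h1P : (1 : Equiv.Perm V) ∈ PF := hmemP.mpr (fun v => Or.inl rfl)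
  have h1mem : (1 : Equiv.Perm V) ∈ N₀F := Finset.mem_filter.mpr ⟨h1P, rfl⟩
  have hN₀sing : N₀F = {1} := by
    apply Finset.eq_singleton_iff_unique_mem.mpr
    refine ⟨h1mem, ?_⟩
    intro g hg
    by_contra hne
    obtain ⟨u, hu⟩ : ∃ u, g u ≠ u := by
      by_contra h; push_neg at h; exact hne (Equiv.ext h)
    have hham1 : (hamF E {x | g x = x}).card = 1 := (hzero g hg).2
    obtain ⟨c, hcmem⟩ := Finset.card_pos.mp (by omega : 0 < (hamF E {x | g x = x}).card)
    obtain ⟨ccyc, csupp, ccompat⟩ := mem_hamF.mp hcmem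
    obtain ⟨hgP, hgv₀⟩ := Finset.mem_filter.mp hg
    have hcmemN₁ : c ∈ N₁F := by
      rw [hN₁F, Finset.mem_filter]
      refine ⟨hmemP.mpr ?_, ?_, ?_⟩
      · intro x
        by_cases h : c x = x
        · exact Or.inl h
        · exact Or.inr (ccompat x h)
      · exact (csupp v₀).mpr hgv₀
      · intro hall
        have hcu : c u = u := by
          by_contra h
          exact hu ((csupp u).mp h)
        have := hall u
        rw [hcu] at this
        exact hE u this
    rw [hN₁empty] at hcmemN₁
    exact absurd hcmemN₁ (Finset.notMem_empty c)
  -- extract the unique derangement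
  have hDcard1 : DF.card = 1 := by
    rw [hsumD, hN₀sing, Finset.sum_singleton, hfibD 1 h1mem]
    have := hzero 1 h1mem
    exact this.2
  obtain ⟨π, hDsing⟩ := Finset.card_eq_one.mp hDcard1
  have hπD : π ∈ DF := by rw [hDsing]; exact Finset.mem_singleton_self π
  have hπv₀ : π v₀ ≠ v₀ := hDmoves hπD v₀
  have hRπ : R π = 1 := by
    have := hRmem π (hDsubP hπD)
    rw [hN₀sing, Finset.mem_singleton] at this
    exact this
  have hπeq : π.cycleOf v₀ = π := by
    have h1 : R π * π.cycleOf v₀ = π := by rw [hR, inv_mul_cancel_right]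
    rw [hRπ, one_mul] at h1
    exact h1
  have hπcyc : π.IsCycle := by
    rw [← hπeq]
    exact isCycle_cycleOf π hπv₀
  have hPcases : ∀ σ, σ ∈ PF → σ ∈ DF ∨ σ ∈ N₀F ∨ σ ∈ N₁F := by
    intro σ hσ
    by_cases h1 : ∀ v, E v (σ v)
    · exact Or.inl (hmemD.mpr h1)
    · by_cases h2 : σ v₀ = v₀
      · exact Or.inr (Or.inl (Finset.mem_filter.mpr ⟨hσ, h2⟩))
      · exact Or.inr (Or.inr (Finset.mem_filter.mpr ⟨hσ, h2, h1⟩))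
  refine ⟨π, hπcyc, hDmoves hπD, ?_⟩
  intro v w
  constructor
  · intro hEvw
    by_contra hne
    have hwv : w ≠ v := by
      intro h
      rw [h] at hEvw
      exact hE v hEvw
    obtain ⟨σ, scyc, sv, sfix, sA, smov⟩ :=
      chord π hπcyc (fun x _ => hmemD.mp hπD x) (hDmoves hπD v) (hDmoves hπD w)
        hEvw hwv (fun h => hne h.symm)
    have hσP : σ ∈ PF := by
      rw [hmemP]
      intro x
      by_cases h : σ x = x
      · exact Or.inl h
      · exact Or.inr (sA x h)
    rcases hPcases σ hσP with h | h | h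
    · rw [hDsing, Finset.mem_singleton] at h
      rw [h] at sfix
      exact hDmoves hπD (π v) sfix
    · rw [hN₀sing, Finset.mem_singleton] at h
      rw [h] at sv
      exact hwv sv.symm
    · rw [hN₁empty] at h
      exact absurd h (Finset.notMem_empty σ)
  · intro h
    rw [← h]
    exact hmemD.mp hπD v
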